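/- In the Mussa–Rosen model with the fixed-market-share collusive scheme, for an intermediate firm i (1<i<n) with Δ = p_1^c − p_1^* > 0 and noncollusive margin m_i = p_i^* − c_i > 0, the critical discount factor equals δ̄_i ≡ (π_i^d − π_i^c)/(π_i^d − π_i^*) = ((1/4)Δ)/((1/4)Δ + m_i), and for any common discount factor δ ∈ (0,1) the incentive compatibility constraint Ω_i ≡ π_i^c − (1−δ)π_i^d − δπ_i^* ≥ 0 holds if and only if δ ≥ δ̄_i. -/

import Mathlib

/-- Mussa–Rosen model with the fixed-market-share collusive scheme: for an
intermediate firm with `Δ = p_1^c − p_1^* > 0` and noncollusive margin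
`m = p* − c > 0`, the critical discount factor equals
`δ̄ = (π^d − π^c)/(π^d − π^*) = ((1/4)Δ)/((1/4)Δ + m)`, and for `δ ∈ (0,1)` the
incentive constraint `Ω = π^c − (1−δ)π^d − δπ^* ≥ 0` holds iff `δ ≥ δ̄`. -/
theorem critical_discount_factor_intermediate
    (vprev v vnext c pmStar pStar ppStar Δ pd πd πc πst : ℝ)
    (hv0 : 0 < vprev) (hv1 : vprev < v) (hv2 : v < vnext)
    (hΔ : 0 < Δ) (hm : 0 < pStar - c)
    (hnash : pStar = (1/2) * (pmStar * (vnext - v) + ppStar * (v - vprev)) / (vnext - vprev)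
      + (1/2) * c)
    (hpd : pd = (1/2) * ((pmStar + Δ) * (vnext - v) + (ppStar + Δ) * (v - vprev))
      / (vnext - vprev) + (1/2) * c)
    (hπd : πd = (pd - c) * (((ppStar + Δ) - pd) / (vnext - v)
      - (pd - (pmStar + Δ)) / (v - vprev)))
    (hπc : πc = ((pStar + Δ) - c) * (((ppStar + Δ) - (pStar + Δ)) / (vnext - v)
      - ((pStar + Δ) - (pmStar + Δ)) / (v - vprev)))
    (hπst : πst = (pStar - c) * ((ppStar - pStar) / (vnext - v)
      - (pStar - pmStar) / (v - vprev))) :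
    (πd - πc) / (πd - πst) = ((1/4) * Δ) / ((1/4) * Δ + (pStar - c))
    ∧ ∀ δ : ℝ, 0 < δ → δ < 1 →
        (πc - (1 - δ) * πd - δ * πst ≥ 0 ↔
          ((1/4) * Δ) / ((1/4) * Δ + (pStar - c)) ≤ δ) := by
  have ha : 0 < vnext - v := by linarith
  have hb : 0 < v - vprev := by linarith
  have ha' : vnext - v ≠ 0 := ne_of_gt ha
  have hb' : v - vprev ≠ 0 := ne_of_gt hb
  have hd' : vnext - vprev ≠ 0 := ne_of_gt (by linarith)
  set m := pStar - c with hm_def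
  set K := (vnext - vprev) / ((vnext - v) * (v - vprev)) with hK_def
  have hK : 0 < K := div_pos (by linarith) (mul_pos ha hb)
  have hnash' : 2 * pStar * (vnext - vprev)
      = pmStar * (vnext - v) + ppStar * (v - vprev) + c * (vnext - vprev) := by
    field_simp at hnash; linear_combination hnash
  have hq : (ppStar - pStar) / (vnext - v) - (pStar - pmStar) / (v - vprev) = m * K := by
    rw [hm_def, hK_def]; field_simp; linear_combination -hnash'
  have hpd' : pd = pStar + Δ / 2 := by
    rw [hpd, hnash]; field_simp; ring
  have hπst' : πst = m ^ 2 * K := by rw [hπst, hq]; ring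
  have hπc' : πc = (m + Δ) * m * K := by
    rw [hπc]
    have : (ppStar + Δ - (pStar + Δ)) / (vnext - v)
        - (pStar + Δ - (pmStar + Δ)) / (v - vprev) = m * K := by
      rw [← hq]; ring_nf
    rw [this]; ring
  have hab : 1 / (vnext - v) + 1 / (v - vprev) = K := by
    rw [hK_def]; field_simp; ring
  have hqd : (ppStar + Δ - (pStar + Δ / 2)) / (vnext - v)
      - ((pStar + Δ / 2) - (pmStar + Δ)) / (v - vprev) = (m + Δ / 2) * K := by
    linear_combination hq + (Δ / 2) * hab
  have hπd' : πd = (m + Δ / 2) ^ 2 * K := by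
    rw [hπd, hpd', hqd, hm_def]; ring
  have hdc : πd - πc = (Δ ^ 2 / 4) * K := by rw [hπd', hπc']; ring
  have hds : πd - πst = (Δ * (m + Δ / 4)) * K := by rw [hπd', hπst']; ring
  have hmd : 0 < (1/4) * Δ + m := by linarith
  have hΔK : 0 < Δ * K := by positivity
  have hratio : (πd - πc) / (πd - πst) = ((1/4) * Δ) / ((1/4) * Δ + m) := by
    rw [hdc, hds, div_eq_div_iff (by positivity) (by positivity)]
    ring
  refine ⟨hratio, fun δ hδ0 hδ1 => ?_⟩
  rw [div_le_iff₀ hmd]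
  have hiff : πd - πc ≤ δ * (πd - πst) ↔ (1/4) * Δ ≤ δ * ((1/4) * Δ + m) := by
    rw [hdc, hds,
      show Δ ^ 2 / 4 * K = ((1/4) * Δ) * (Δ * K) by ring,
      show δ * (Δ * (m + Δ / 4) * K) = (δ * ((1/4) * Δ + m)) * (Δ * K) by ring]
    exact mul_le_mul_iff_of_pos_right hΔK
  constructor
  · intro h
    exact hiff.mp (by linarith)
  · intro h
    have := hiff.mpr h
    linarith
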